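/- arXiv:1303.4328 — 2 statements merged into one kernel-verified Lean document; each statement's English description precedes it below -/
import Mathlib

section
/- Let X be a topological space and f, g : X → ℝ continuous with sup_{x∈X} |f(x) − g(x)| < ε. With F_r^h(a,b) = dim(image(H_r(h⁻¹((-∞,a])) → H_r(X)) ∩ image(H_r(h⁻¹([b,∞))) → H_r(X))) for a continuous map h, one has F_r^f(a−ε, b+ε) ≤ F_r^g(a,b) for all a ≤ b. -/
open CategoryTheory

lemma range_le_of_le {κ : Type} [Field κ] {X : Type} (H : Set X ⥤ ModuleCat κ)
    {A B : Set X} (hAB : A ≤ B) :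
    LinearMap.range (H.map (homOfLE (le_top : A ≤ ⊤))).hom ≤
      LinearMap.range (H.map (homOfLE (le_top : B ≤ ⊤))).hom := by
  have : (homOfLE (le_top : A ≤ ⊤)) = (homOfLE hAB) ≫ (homOfLE (le_top : B ≤ ⊤)) := rfl
  rw [this, H.map_comp]
  rintro x ⟨y, rfl⟩
  exact ⟨(H.map (homOfLE hAB)).hom y, rfl⟩

/-- If `f, g : X → ℝ` are continuous with `|f − g| < ε` pointwise, then
`F_r^f(a−ε, b+ε) ≤ F_r^g(a,b)` for all `a ≤ b`, where
`F_r^h(x,y) = dim (image(H_r(h⁻¹((-∞,x])) → H_r(X)) ∩ image(H_r(h⁻¹([y,∞))) → H_r(X)))`.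
Homology in a fixed degree with field coefficients, with all inclusion-induced maps, is
encoded as a functor `H` from the poset of subsets of `X` to vector spaces. -/
theorem F_stability
    (κ : Type) [Field κ] {X : Type} [TopologicalSpace X]
    (f g : X → ℝ) (hf : Continuous f) (hg : Continuous g)
    (ε : ℝ) (hfg : ∀ x, |f x - g x| < ε)
    (H : Set X ⥤ ModuleCat κ)
    (a b : ℝ) (hab : a ≤ b) :
    Module.rank κ
        ↥(LinearMap.range (H.map (homOfLE (le_top : f ⁻¹' (Set.Iic (a - ε)) ≤ ⊤))).hom ⊓
          LinearMap.range (H.map (homOfLE (le_top : f ⁻¹' (Set.Ici (b + ε)) ≤ ⊤))).hom) ≤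
      Module.rank κ
        ↥(LinearMap.range (H.map (homOfLE (le_top : g ⁻¹' (Set.Iic a) ≤ ⊤))).hom ⊓
          LinearMap.range (H.map (homOfLE (le_top : g ⁻¹' (Set.Ici b) ≤ ⊤))).hom) := by
  apply Submodule.rank_mono
  apply inf_le_inf
  · apply range_le_of_le
    intro x hx
    have := abs_lt.1 (hfg x)
    have hx' : f x ≤ a - ε := hx
    simp only [Set.mem_preimage, Set.mem_Iic]
    linarith [this.1]
  · apply range_le_of_le
    intro x hx
    have := abs_lt.1 (hfg x)
    have hx' : b + ε ≤ f x := hx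
    simp only [Set.mem_preimage, Set.mem_Ici]
    linarith [this.2]
end

section
/- Let X be a topological space, f : X → ℝ continuous, and a ≥ b real numbers, so that X = X_a ∪ X^b where X_a = f⁻¹((-∞,a]) and X^b = f⁻¹([b,∞)). Then I_a(r) ∩ I^b(r) = image(H_r(X_a ∩ X^b) → H_r(X)), where I_a(r) and I^b(r) are the images of H_r(X_a) and H_r(X^b) in H_r(X). In particular, if H_r(f⁻¹([b,a])) is finite dimensional then dim(I_a(r) ∩ I^b(r)) is finite. -/
open CategoryTheory

/-- Let `f : X → ℝ` be continuous and `a ≥ b`, so that the sublevel set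
`X_a = f⁻¹((-∞,a])` and the superlevel set `X^b = f⁻¹([b,∞))` cover `X`.  Homology in a
fixed degree with field coefficients, with all inclusion-induced maps, is encoded as a
functor `H` from the poset of subsets of `X` to vector spaces; the Mayer–Vietoris input
is the hypothesis `hMV` (exactness of `H(X_a ∩ X^b) → H(X_a) ⊕ H(X^b) → H(X)`).
Then `I_a ∩ I^b = image(H(X_a ∩ X^b) → H(X))`; in particular, if `H(X_a ∩ X^b)` is finite
dimensional then so is `I_a ∩ I^b`. -/
theorem image_inter_eq_image_of_interlevel
    (κ : Type) [Field κ] {X : Type} [TopologicalSpace X]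
    (f : X → ℝ) (hf : Continuous f)
    (a b : ℝ) (hba : b ≤ a)
    (H : Set X ⥤ ModuleCat κ)
    (hMV : ∀ (u : H.obj (f ⁻¹' (Set.Iic a))) (v : H.obj (f ⁻¹' (Set.Ici b))),
      H.map (homOfLE (le_top : f ⁻¹' (Set.Iic a) ≤ ⊤)) u =
        H.map (homOfLE (le_top : f ⁻¹' (Set.Ici b) ≤ ⊤)) v →
      ∃ w : H.obj (f ⁻¹' (Set.Iic a) ∩ f ⁻¹' (Set.Ici b)),
        H.map (homOfLE Set.inter_subset_left) w = u ∧
        H.map (homOfLE Set.inter_subset_right) w = v) :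
    LinearMap.range (H.map (homOfLE (le_top : f ⁻¹' (Set.Iic a) ≤ ⊤))).hom ⊓
        LinearMap.range (H.map (homOfLE (le_top : f ⁻¹' (Set.Ici b) ≤ ⊤))).hom =
      LinearMap.range
        (H.map (homOfLE (le_top : f ⁻¹' (Set.Iic a) ∩ f ⁻¹' (Set.Ici b) ≤ ⊤))).hom ∧
    (FiniteDimensional κ (H.obj (f ⁻¹' (Set.Iic a) ∩ f ⁻¹' (Set.Ici b))) →
      FiniteDimensional κ
        ↥(LinearMap.range (H.map (homOfLE (le_top : f ⁻¹' (Set.Iic a) ≤ ⊤))).hom ⊓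
          LinearMap.range (H.map (homOfLE (le_top : f ⁻¹' (Set.Ici b) ≤ ⊤))).hom)) := by
  have hfacA : H.map (homOfLE (le_top : f ⁻¹' (Set.Iic a) ∩ f ⁻¹' (Set.Ici b) ≤ ⊤)) =
      H.map (homOfLE (Set.inter_subset_left :
        f ⁻¹' (Set.Iic a) ∩ f ⁻¹' (Set.Ici b) ≤ f ⁻¹' (Set.Iic a))) ≫
      H.map (homOfLE (le_top : f ⁻¹' (Set.Iic a) ≤ ⊤)) := by
    rw [← H.map_comp]; rfl
  have hfacB : H.map (homOfLE (le_top : f ⁻¹' (Set.Iic a) ∩ f ⁻¹' (Set.Ici b) ≤ ⊤)) =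
      H.map (homOfLE (Set.inter_subset_right :
        f ⁻¹' (Set.Iic a) ∩ f ⁻¹' (Set.Ici b) ≤ f ⁻¹' (Set.Ici b))) ≫
      H.map (homOfLE (le_top : f ⁻¹' (Set.Ici b) ≤ ⊤)) := by
    rw [← H.map_comp]; rfl
  have key : LinearMap.range (H.map (homOfLE (le_top : f ⁻¹' (Set.Iic a) ≤ ⊤))).hom ⊓
        LinearMap.range (H.map (homOfLE (le_top : f ⁻¹' (Set.Ici b) ≤ ⊤))).hom =
      LinearMap.range
        (H.map (homOfLE (le_top : f ⁻¹' (Set.Iic a) ∩ f ⁻¹' (Set.Ici b) ≤ ⊤))).hom := by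
    apply le_antisymm
    · rintro x ⟨⟨u, hu⟩, ⟨v, hv⟩⟩
      obtain ⟨w, hwu, hwv⟩ := hMV u v (hu.trans hv.symm)
      exact ⟨w, by rw [hfacA, ModuleCat.hom_comp, LinearMap.comp_apply, hwu]; exact hu⟩
    · rintro x ⟨w, rfl⟩
      constructor
      · exact ⟨_, by rw [hfacA]; rfl⟩
      · exact ⟨_, by rw [hfacB]; rfl⟩
  refine ⟨key, fun hfd => ?_⟩
  rw [key]
  exact Module.Finite.range _
end
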